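/- For a weak bimonad T on a monoidal category M, with τ and τ₀ the induced opmonoidal structure on T, and for any T-algebras (A,a) and (B,b), the morphism E_{A,B} := (a ⊗ b) ∘ τ_{A,B} ∘ u_{A⊗B} : A ⊗ B → A ⊗ B equals i_{A,B} ∘ p_{A,B} and is idempotent, where (p, p₀) and (i, i₀) are the monoidal and opmonoidal structures of the forgetful functor U : Mᵀ → M. -/

import Mathlib

open CategoryTheory MonoidalCategory

/-- A separable Frobenius structure on a functor between monoidal categories. -/
structure SepFrob {N : Type*} {M : Type*} [Category N] [Category M]
    [MonoidalCategory N] [MonoidalCategory M] (F : N ⥤ M) where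
  p : ∀ X Y : N, F.obj X ⊗ F.obj Y ⟶ F.obj (X ⊗ Y)
  p0 : 𝟙_ M ⟶ F.obj (𝟙_ N)
  i : ∀ X Y : N, F.obj (X ⊗ Y) ⟶ F.obj X ⊗ F.obj Y
  i0 : F.obj (𝟙_ N) ⟶ 𝟙_ M
  p_natural : ∀ {X Y X' Y' : N} (f : X ⟶ X') (g : Y ⟶ Y'),
      (F.map f ⊗ₘ F.map g) ≫ p X' Y' = p X Y ≫ F.map (f ⊗ₘ g)
  i_natural : ∀ {X Y X' Y' : N} (f : X ⟶ X') (g : Y ⟶ Y'),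
      F.map (f ⊗ₘ g) ≫ i X' Y' = i X Y ≫ (F.map f ⊗ₘ F.map g)
  p_assoc : ∀ X Y Z : N,
      (p X Y ⊗ₘ 𝟙 (F.obj Z)) ≫ p (X ⊗ Y) Z ≫ F.map (α_ X Y Z).hom =
        (α_ (F.obj X) (F.obj Y) (F.obj Z)).hom ≫ (𝟙 (F.obj X) ⊗ₘ p Y Z) ≫ p X (Y ⊗ Z)
  p_unit_left : ∀ X : N,
      (p0 ⊗ₘ 𝟙 (F.obj X)) ≫ p (𝟙_ N) X ≫ F.map (λ_ X).hom = (λ_ (F.obj X)).hom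
  p_unit_right : ∀ X : N,
      (𝟙 (F.obj X) ⊗ₘ p0) ≫ p X (𝟙_ N) ≫ F.map (ρ_ X).hom = (ρ_ (F.obj X)).hom
  i_coassoc : ∀ X Y Z : N,
      F.map (α_ X Y Z).hom ≫ i X (Y ⊗ Z) ≫ (𝟙 (F.obj X) ⊗ₘ i Y Z) =
        i (X ⊗ Y) Z ≫ (i X Y ⊗ₘ 𝟙 (F.obj Z)) ≫ (α_ (F.obj X) (F.obj Y) (F.obj Z)).hom
  i_unit_left : ∀ X : N,
      i (𝟙_ N) X ≫ (i0 ⊗ₘ 𝟙 (F.obj X)) ≫ (λ_ (F.obj X)).hom = F.map (λ_ X).hom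
  i_unit_right : ∀ X : N,
      i X (𝟙_ N) ≫ (𝟙 (F.obj X) ⊗ₘ i0) ≫ (ρ_ (F.obj X)).hom = F.map (ρ_ X).hom
  frob1 : ∀ X Y Z : N,
      (𝟙 (F.obj X) ⊗ₘ i Y Z) ≫ (α_ (F.obj X) (F.obj Y) (F.obj Z)).inv ≫ (p X Y ⊗ₘ 𝟙 (F.obj Z)) =
        p X (Y ⊗ Z) ≫ F.map (α_ X Y Z).inv ≫ i (X ⊗ Y) Z
  frob2 : ∀ X Y Z : N,
      (i X Y ⊗ₘ 𝟙 (F.obj Z)) ≫ (α_ (F.obj X) (F.obj Y) (F.obj Z)).hom ≫ (𝟙 (F.obj X) ⊗ₘ p Y Z) =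
        p (X ⊗ Y) Z ≫ F.map (α_ X Y Z).hom ≫ i X (Y ⊗ Z)
  sep : ∀ X Y : N, i X Y ≫ p X Y = 𝟙 (F.obj (X ⊗ Y))

variable {M : Type*} [Category M] [MonoidalCategory M]

/-- For a weak bimonad `T` (a monad with monoidal Eilenberg–Moore category and separable
Frobenius forgetful functor) with induced opmonoidal structure `τ`, and `T`-algebras
`(A,a)`, `(B,b)`, the morphism `E_{A,B} = (a ⊗ b) ∘ τ_{A,B} ∘ u_{A⊗B}` equals
`i_{A,B} ∘ p_{A,B}` and is idempotent. -/
theorem weakBimonad_E (T : Monad M) [MonoidalCategory T.Algebra]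
    (S : SepFrob T.forget) (A B : T.Algebra) :
    (T.η.app (A.A ⊗ B.A) ≫
        (T.map (T.η.app A.A ⊗ₘ T.η.app B.A) ≫
          T.map (S.p (T.free.obj A.A) (T.free.obj B.A)) ≫
          (T.free.obj A.A ⊗ T.free.obj B.A).a ≫
          S.i (T.free.obj A.A) (T.free.obj B.A)) ≫
        (A.a ⊗ₘ B.a)) =
      S.p A B ≫ S.i A B ∧
    (S.p A B ≫ S.i A B) ≫ (S.p A B ≫ S.i A B) = S.p A B ≫ S.i A B := by
  constructor
  · set εA : T.free.obj A.A ⟶ A := { f := A.a, h := A.assoc.symm } with hεA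
    set εB : T.free.obj B.A ⟶ B := { f := B.a, h := B.assoc.symm } with hεB
    have h1 : T.η.app (A.A ⊗ B.A) ≫ T.map (T.η.app A.A ⊗ₘ T.η.app B.A) =
        (T.η.app A.A ⊗ₘ T.η.app B.A) ≫ T.η.app (T.obj A.A ⊗ T.obj B.A) := by
      simpa using (T.η.naturality (T.η.app A.A ⊗ₘ T.η.app B.A)).symm
    have h2 : T.η.app (T.obj A.A ⊗ T.obj B.A) ≫
          T.map (S.p (T.free.obj A.A) (T.free.obj B.A)) =
        S.p (T.free.obj A.A) (T.free.obj B.A) ≫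
          T.η.app (T.forget.obj (T.free.obj A.A ⊗ T.free.obj B.A)) := by
      exact (T.η.naturality (S.p (T.free.obj A.A) (T.free.obj B.A))).symm
    have h3 := (T.free.obj A.A ⊗ T.free.obj B.A : T.Algebra).unit
    have h4 := S.i_natural εA εB
    have h5 := S.p_natural εA εB
    have hfA : T.forget.map εA = A.a := rfl
    have hfB : T.forget.map εB = B.a := rfl
    rw [hfA, hfB] at h4 h5
    simp only [Category.assoc]
    slice_lhs 1 2 => rw [h1]
    slice_lhs 2 3 => rw [h2]
    erw [Category.assoc, Category.assoc]
    erw [Category.assoc (T.free.obj A.A ⊗ T.free.obj B.A).a]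
    erw [← Category.assoc (T.η.app _) (T.free.obj A.A ⊗ T.free.obj B.A).a, h3, Category.id_comp]
    erw [← h4, ← reassoc_of% h5]
    erw [← Category.assoc (T.η.app A.A ⊗ₘ T.η.app B.A), tensorHom_comp_tensorHom, A.unit, B.unit,
      id_tensorHom_id, Category.id_comp]
    rfl
  · rw [Category.assoc, ← Category.assoc (S.i A B), S.sep]
    simp
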